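/- For any security view V = (D_v, ann) and any instance T conforming to the original DTD D, a node n of T is accessible w.r.t. the access specification iff n ⊨ A^acc, where A^acc := A1^acc ∧ A2^acc is a qualifier of the fragment X↑[n]. In particular, n ⊨ A1^acc iff condition (i) of the accessibility definition holds at n, and n ⊨ A2^acc iff condition (ii) holds at n. -/

import Mathlib

/-!
# Core model: XML documents, DTDs, XPath fragments and XML security views

Following the paper "XPath query rewriting over recursive XML security views":

* a DTD is a triple `(Ele, P, root)` with `P` mapping element types to regular expressions;
* XML documents are finite node-labeled ordered trees, nodes are identified with their
  positions (lists of child indices);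
* the XPath syntax below is the full fragment `X↑[n,=]`; the sub-fragments
  `X` (downward), `X↑`, `X↑[n]` are carved out by Boolean membership predicates;
* evaluation of paths/qualifiers is parametrized by an accessibility predicate `acc` on
  nodes: with `acc = fun _ => True` it is evaluation over the original document `T`, and
  with `acc = Accessible S T` it is evaluation over the (virtual) view `T_v` of `T`
  (nodes of `T_v` are identified with the accessible nodes of `T`, the parent in `T_v`
  being the nearest accessible ancestor in `T`);
* an access specification `S = (D, ann)` has a finite list of annotations with values
  `Y`, `N`, `[Q]`, and `ann(root) = Y` by default.
-/

abbrev Name := String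

/-- Node labels: element labels, or text nodes carrying a string value. -/
inductive Lab where
  | elem (a : Name)
  | text (s : String)
deriving DecidableEq

/-- Regular expressions for DTD content models. -/
inductive Regex where
  | str
  | eps
  | elem (b : Name)
  | cat (r₁ r₂ : Regex)
  | alt (r₁ r₂ : Regex)
  | star (r : Regex)

/-- `r.occurs B` : element type `B` occurs in the regular expression `r`. -/
def Regex.occurs : Regex → Name → Prop
  | .str, _ => False
  | .eps, _ => False
  | .elem b, B => b = B
  | .cat r₁ r₂, B => r₁.occurs B ∨ r₂.occurs B
  | .alt r₁ r₂, B => r₁.occurs B ∨ r₂.occurs B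
  | .star r, B => r.occurs B

/-- Size of a regular expression: number of subelement types and operators. -/
def Regex.size : Regex → ℕ
  | .str => 1
  | .eps => 1
  | .elem _ => 1
  | .cat r₁ r₂ => r₁.size + r₂.size + 1
  | .alt r₁ r₂ => r₁.size + r₂.size + 1
  | .star r => r.size + 1

/-- The language of a regular expression, over words of labels
(`str` matches any single text node). -/
def Regex.Matches : Regex → List Lab → Prop
  | .str, w => ∃ s, w = [Lab.text s]
  | .eps, w => w = []
  | .elem b, w => w = [Lab.elem b]
  | .cat r₁ r₂, w => ∃ u v, w = u ++ v ∧ r₁.Matches u ∧ r₂.Matches v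
  | .alt r₁ r₂, w => r₁.Matches w ∨ r₂.Matches w
  | .star r, w => ∃ ws : List (List Lab), (∀ u ∈ ws, r.Matches u) ∧ w = ws.flatten

/-- A DTD `D = (Ele, P, root)`. -/
structure DTD where
  Ele : Finset Name
  root : Name
  P : Name → Regex
  root_mem : root ∈ Ele
  /-- each production `P(A)` is a regular expression over `Ele` -/
  occ_mem : ∀ A ∈ Ele, ∀ B, (P A).occurs B → B ∈ Ele

/-- A DTD is recursive iff some element type is defined, directly or indirectly,
in terms of itself. -/
def DTD.Recursive (D : DTD) : Prop :=
  ∃ A, Relation.TransGen (fun X Y => (D.P X).occurs Y) A A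

/-- Finite node-labeled ordered trees (XML trees). -/
inductive XTree where
  | mk (lab : Lab) (children : List XTree)

def XTree.lab : XTree → Lab
  | .mk l _ => l

def XTree.children : XTree → List XTree
  | .mk _ c => c

/-- Node positions: paths of child indices from the root (the root is `[]`). -/
abbrev Pos := List ℕ

/-- The subtree of `t` at position `p`, if it exists. -/
def XTree.sub? : XTree → Pos → Option XTree
  | t, [] => some t
  | t, i :: p =>
    match t.children[i]? with
    | some c => XTree.sub? c p
    | none => none

/-- `n` is a node of `t`. -/
def XTree.IsNode (t : XTree) (n : Pos) : Prop := (t.sub? n).isSome = true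

/-- Element type of the node at position `n` (none for text nodes / non-nodes). -/
def typeAt (t : XTree) (n : Pos) : Option Name :=
  match t.sub? n with
  | some s =>
    match s.lab with
    | .elem a => some a
    | _ => none
  | none => none

/-- The element at position `n` has `c` as text content (a text child with value `c`). -/
def HasText (t : XTree) (n : Pos) (c : String) : Prop :=
  ∃ s, t.sub? n = some s ∧ Lab.text c ∈ s.children.map XTree.lab

/-- `m` is a strict ancestor of `n`. -/
def StrictAnc (m n : Pos) : Prop := m <+: n ∧ m ≠ n

/-- Document order on positions (lexicographic; an ancestor precedes its descendants). -/
def posLt (m n : Pos) : Prop := List.Lex (· < ·) m n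

/-- Parent position. -/
def parentPos (n : Pos) : Pos := n.dropLast

/-- `T` conforms to `D` (`T` is an instance of `D`): the root is the unique node
labeled `root`, every node is labeled with an element type of `D` or with text,
the children word of each `A`-node matches `P(A)`, and text nodes are leaves. -/
def Conforms (t : XTree) (D : DTD) : Prop :=
  t.lab = Lab.elem D.root ∧
  (∀ n s, t.sub? n = some s → s.lab = Lab.elem D.root → n = []) ∧
  (∀ n s, t.sub? n = some s →
      (∃ A, s.lab = Lab.elem A ∧ A ∈ D.Ele) ∨ ∃ c, s.lab = Lab.text c) ∧
  (∀ n s A, t.sub? n = some s → s.lab = Lab.elem A →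
      (D.P A).Matches (s.children.map XTree.lab)) ∧
  (∀ n s c, t.sub? n = some s → s.lab = Lab.text c → s.children = [])

/-! ## XPath syntax: the full fragment `X↑[n,=]` -/

inductive Axis where
  | child | descendant | self | parent | ancestor | ancestorOrSelf
deriving DecidableEq

inductive NodeTest where
  | name (a : Name)
  | star
deriving DecidableEq

mutual
  /-- XPath paths (the full fragment `X↑[n,=]`): steps, filters `p[q]`,
  position predicates `p[k]`, composition `p/p` and union `p ∪ p`. -/
  inductive XPath where
    | axis (ax : Axis) (nt : NodeTest)
    | filter (p : XPath) (q : XQual)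
    | pos (p : XPath) (k : ℕ)
    | seq (p₁ p₂ : XPath)
    | union (p₁ p₂ : XPath)
  /-- XPath qualifiers: paths, text comparison `p = c`, node comparison
  `[p₁ = p₂]`, and Boolean combinations. -/
  inductive XQual where
    | path (p : XPath)
    | cmp (p : XPath) (c : String)
    | nodeEq (p₁ p₂ : XPath)
    | and (q₁ q₂ : XQual)
    | or (q₁ q₂ : XQual)
    | not (q : XQual)
end

def Axis.downb : Axis → Bool
  | .child => true
  | .descendant => true
  | _ => false

mutual
  /-- Membership in the downward fragment `X` (only `↓`, `↓⁺`, no position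
  predicate, no node comparison). -/
  def XPath.inXb : XPath → Bool
    | .axis ax _ => ax.downb
    | .filter p q => p.inXb && q.inXb
    | .pos _ _ => false
    | .seq p₁ p₂ => p₁.inXb && p₂.inXb
    | .union p₁ p₂ => p₁.inXb && p₂.inXb
  def XQual.inXb : XQual → Bool
    | .path p => p.inXb
    | .cmp p _ => p.inXb
    | .nodeEq _ _ => false
    | .and q₁ q₂ => q₁.inXb && q₂.inXb
    | .or q₁ q₂ => q₁.inXb && q₂.inXb
    | .not q => q.inXb
end

mutual
  /-- Membership in `X↑` (`X` plus the self and upward axes). -/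
  def XPath.inXUpb : XPath → Bool
    | .axis _ _ => true
    | .filter p q => p.inXUpb && q.inXUpb
    | .pos _ _ => false
    | .seq p₁ p₂ => p₁.inXUpb && p₂.inXUpb
    | .union p₁ p₂ => p₁.inXUpb && p₂.inXUpb
  def XQual.inXUpb : XQual → Bool
    | .path p => p.inXUpb
    | .cmp p _ => p.inXUpb
    | .nodeEq _ _ => false
    | .and q₁ q₂ => q₁.inXUpb && q₂.inXUpb
    | .or q₁ q₂ => q₁.inXUpb && q₂.inXUpb
    | .not q => q.inXUpb
end

mutual
  /-- Membership in `X↑[n]` (`X↑` plus the position predicate; no node comparison). -/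
  def XPath.inXUpPosb : XPath → Bool
    | .axis _ _ => true
    | .filter p q => p.inXUpPosb && q.inXUpPosb
    | .pos p _ => p.inXUpPosb
    | .seq p₁ p₂ => p₁.inXUpPosb && p₂.inXUpPosb
    | .union p₁ p₂ => p₁.inXUpPosb && p₂.inXUpPosb
  def XQual.inXUpPosb : XQual → Bool
    | .path p => p.inXUpPosb
    | .cmp p _ => p.inXUpPosb
    | .nodeEq _ _ => false
    | .and q₁ q₂ => q₁.inXUpPosb && q₂.inXUpPosb
    | .or q₁ q₂ => q₁.inXUpPosb && q₂.inXUpPosb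
    | .not q => q.inXUpPosb
end

mutual
  /-- The element-type names occurring in a path. -/
  def XPath.names : XPath → List Name
    | .axis _ (.name a) => [a]
    | .axis _ .star => []
    | .filter p q => p.names ++ q.names
    | .pos p _ => p.names
    | .seq p₁ p₂ => p₁.names ++ p₂.names
    | .union p₁ p₂ => p₁.names ++ p₂.names
  def XQual.names : XQual → List Name
    | .path p => p.names
    | .cmp p _ => p.names
    | .nodeEq p₁ p₂ => p₁.names ++ p₂.names
    | .and q₁ q₂ => q₁.names ++ q₂.names
    | .or q₁ q₂ => q₁.names ++ q₂.names
    | .not q => q.names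
end

/-! ## XPath semantics, parametrized by an accessibility predicate -/

def TestOk (t : XTree) (nt : NodeTest) (y : Pos) : Prop :=
  match nt with
  | .name a => typeAt t y = some a
  | .star => (typeAt t y).isSome = true

/-- Axis relations in the tree restricted to `acc`-nodes: the child relation is
"nearest accessible descendant", etc. (with `acc = fun _ => True` these are the
usual axes of the original document). -/
def AxisRel (acc : Pos → Prop) : Axis → Pos → Pos → Prop
  | .self, x, y => y = x
  | .child, x, y => StrictAnc x y ∧ acc y ∧ ∀ z, StrictAnc x z → StrictAnc z y → ¬ acc z
  | .descendant, x, y => StrictAnc x y ∧ acc y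
  | .parent, x, y => StrictAnc y x ∧ acc y ∧ ∀ z, StrictAnc y z → StrictAnc z x → ¬ acc z
  | .ancestor, x, y => StrictAnc y x ∧ acc y
  | .ancestorOrSelf, x, y => (y = x ∨ StrictAnc y x) ∧ acc y

/-- The `k`-th node (1-indexed) of an (ordered) node set; reverse axes produce their
results nearest-first, so the order used here is reverse document order. -/
noncomputable def nthRev (Sp : Set Pos) (k : ℕ) : Set Pos :=
  {x | x ∈ Sp ∧ ({y | y ∈ Sp ∧ posLt x y}).ncard = k - 1}

mutual
  /-- `evalP t acc p x` : the node set `x⟦p⟧` obtained by evaluating path `p`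
  at context node `x`, in the document `t` restricted to `acc`-nodes. -/
  noncomputable def evalP (t : XTree) (acc : Pos → Prop) : XPath → Pos → Set Pos
    | .axis ax nt, x => {y | t.IsNode y ∧ AxisRel acc ax x y ∧ TestOk t nt y}
    | .filter p q, x => {y | y ∈ evalP t acc p x ∧ evalQ t acc q y}
    | .pos p k, x => nthRev (evalP t acc p x) k
    | .seq p₁ p₂, x => {z | ∃ y, y ∈ evalP t acc p₁ x ∧ z ∈ evalP t acc p₂ y}
    | .union p₁ p₂, x => evalP t acc p₁ x ∪ evalP t acc p₂ x
  /-- `evalQ t acc q x` : the qualifier `q` holds at context node `x` (`x ⊨ q`). -/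
  noncomputable def evalQ (t : XTree) (acc : Pos → Prop) : XQual → Pos → Prop
    | .path p, x => (evalP t acc p x).Nonempty
    | .cmp p c, x => ∃ y, y ∈ evalP t acc p x ∧ HasText t y c
    | .nodeEq p₁ p₂, x => ∃ y, evalP t acc p₁ x = {y} ∧ evalP t acc p₂ x = {y}
    | .and q₁ q₂, x => evalQ t acc q₁ x ∧ evalQ t acc q₂ x
    | .or q₁ q₂, x => evalQ t acc q₁ x ∨ evalQ t acc q₂ x
    | .not q, x => ¬ evalQ t acc q x
end

/-! ## Access specifications, accessibility, security views -/

/-- Annotation values `Y`, `N`, `[Q]`. -/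
inductive AnnVal where
  | Y
  | N
  | cond (q : XQual)

/-- An access specification `S = (D, ann)`: `ann` is a finite partial map given as a
list of triples `(A, B, ann(A,B))`, defined only on productions of `D`, with
qualifiers taken from the downward fragment `X`; `ann(root) = Y` by default. -/
structure AccessSpec where
  D : DTD
  ann : List (Name × Name × AnnVal)
  ann_nodup : (ann.map fun e => (e.1, e.2.1)).Nodup
  ann_dom : ∀ e ∈ ann, e.1 ∈ D.Ele ∧ (D.P e.1).occurs e.2.1
  ann_X : ∀ e ∈ ann, ∀ q, e.2.2 = AnnVal.cond q → q.inXb = true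

/-- `ann(A,B)`, if defined. -/
def AccessSpec.lookup (S : AccessSpec) (A B : Name) : Option AnnVal :=
  (S.ann.find? fun e => e.1 == A && e.2.1 == B).map fun e => e.2.2

/-- Node `n` (of type `B`, with parent of type `A`) is concerned by the
annotation value `v` : `ann(A,B) = v`. -/
def ConcernedBy (S : AccessSpec) (t : XTree) (n : Pos) (v : AnnVal) : Prop :=
  ∃ A B, n ≠ [] ∧ typeAt t n = some B ∧ typeAt t (parentPos n) = some A ∧
    S.lookup A B = some v

/-- Node `n` is concerned by an annotation. -/
def Concerned (S : AccessSpec) (t : XTree) (n : Pos) : Prop := ∃ v, ConcernedBy S t n v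

/-- The annotation concerning `n` is valid at `n` : its value is `Y`, or it is
`[Q]` and `n ⊨ Q` (annotation qualifiers are evaluated over the original document). -/
def ValidAnnAt (S : AccessSpec) (t : XTree) (n : Pos) : Prop :=
  ConcernedBy S t n AnnVal.Y ∨
    ∃ q, ConcernedBy S t n (AnnVal.cond q) ∧ evalQ t (fun _ => True) q n

/-- Concerned, treating the root as concerned by the default annotation `ann(root) = Y`. -/
def ConcernedR (S : AccessSpec) (t : XTree) (n : Pos) : Prop := n = [] ∨ Concerned S t n

/-- Valid annotation, the root's default annotation being valid. -/
def ValidR (S : AccessSpec) (t : XTree) (n : Pos) : Prop := n = [] ∨ ValidAnnAt S t n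

/-- Condition (i) of the accessibility definition: `n` is concerned by a valid
annotation, or `n` is not concerned by an annotation and the first (nearest)
ancestor of `n` concerned by an annotation has that annotation valid at it. -/
def CondI (S : AccessSpec) (t : XTree) (n : Pos) : Prop :=
  (ConcernedR S t n ∧ ValidR S t n) ∨
    (¬ ConcernedR S t n ∧ ∃ m, StrictAnc m n ∧ ConcernedR S t m ∧ ValidR S t m ∧
      ∀ m', StrictAnc m m' → StrictAnc m' n → ¬ Concerned S t m')

/-- Condition (ii): every ancestor concerned by an annotation `[Q']` satisfies `Q'`. -/
def CondII (S : AccessSpec) (t : XTree) (n : Pos) : Prop :=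
  ∀ m q, StrictAnc m n → ConcernedBy S t m (AnnVal.cond q) →
    evalQ t (fun _ => True) q m

/-- Node `n` of the instance `T` is accessible w.r.t. the access specification `S`. -/
def Accessible (S : AccessSpec) (t : XTree) (n : Pos) : Prop :=
  t.IsNode n ∧ CondI S t n ∧ CondII S t n

/-- The element types of the DTD view `D_v` (the element types of `D` that are not
eliminated): the root, and every type reachable from an accessible type through a
production edge not annotated `N`. -/
inductive AccType (S : AccessSpec) : Name → Prop where
  | root : AccType S S.D.root
  | step {A B : Name} : AccType S A → (S.D.P A).occurs B →
      S.lookup A B ≠ some AnnVal.N → AccType S B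

/-- `B` is a child type of `A` in the DTD view (element types hidden in between
are spliced out). -/
inductive ViewChild (S : AccessSpec) : Name → Name → Prop where
  | direct {A B} : (S.D.P A).occurs B → S.lookup A B ≠ some AnnVal.N → ViewChild S A B
  | through {A C B} : (S.D.P A).occurs C → S.lookup A C = some AnnVal.N →
      ViewChild S C B → ViewChild S A B

/-- The child-type relation of the DTD view `D_v`. -/
def ViewChildV (S : AccessSpec) (A B : Name) : Prop :=
  AccType S A ∧ AccType S B ∧ ViewChild S A B

/-- The security view `V = (D_v, ann)` is recursive: its DTD view `D_v` is recursive. -/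
def ViewRecursive (S : AccessSpec) : Prop :=
  ∃ A, Relation.TransGen (ViewChildV S) A A

/-- `|D_v|` : the number of element types of the DTD view. -/
noncomputable def viewSize (S : AccessSpec) : ℕ :=
  {A | A ∈ S.D.Ele ∧ AccType S A}.ncard

/-- A query formulated over the DTD view `D_v` : all its element-type names are
element types of `D_v`. -/
def OverView (S : AccessSpec) (p : XPath) : Prop :=
  ∀ a ∈ p.names, AccType S a

/-- `Q(T_v)` : evaluation of `Q` over the (virtual) view `T_v` of `T`, nodes of `T_v`
being identified with the accessible nodes of `T`. -/
noncomputable def evalView (S : AccessSpec) (t : XTree) (p : XPath) (x : Pos) : Set Pos :=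
  evalP t (Accessible S t) p x

/-- `Q(T)` : evaluation of `Q` over the original document `T`. -/
noncomputable def evalFull (t : XTree) (p : XPath) (x : Pos) : Set Pos :=
  evalP t (fun _ => True) p x

/-! ## The predicates `A₁^acc`, `A₂^acc`, `A^acc`, `A⁺`, `A^B` -/

/-- A trivially true qualifier (at element nodes). -/
def qTrue : XQual := XQual.path (XPath.axis Axis.self NodeTest.star)

/-- `ε::A/↑::A'` for an annotation entry `ann(A',A)` (entry `(A', A, v)`). -/
def annStep (e : Name × Name × AnnVal) : XQual :=
  XQual.path (XPath.seq (XPath.axis Axis.self (NodeTest.name e.2.1))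
    (XPath.axis Axis.parent (NodeTest.name e.1)))

/-- `ε::A.σ(A',A)/↑::A'` : `ε::A[Q]/↑::A'` if `ann(A',A) = [Q]`, `ε::A/↑::A'` if
`ann(A',A) = Y`, nothing if `ann(A',A) = N`. -/
def annStepSigma (e : Name × Name × AnnVal) : Option XQual :=
  match e.2.2 with
  | AnnVal.Y => some (annStep e)
  | AnnVal.cond q => some (XQual.path (XPath.seq
      (XPath.filter (XPath.axis Axis.self (NodeTest.name e.2.1)) q)
      (XPath.axis Axis.parent (NodeTest.name e.1))))
  | AnnVal.N => none

/-- `ε::root ∨_{ann(A',A) ∈ ann} ε::A/↑::A'`. -/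
def qual1 (S : AccessSpec) : XQual :=
  S.ann.foldr (fun e q => XQual.or (annStep e) q)
    (XQual.path (XPath.axis Axis.self (NodeTest.name S.D.root)))

/-- `ε::root ∨_{ann(A',A) = Y | [Q]} ε::A.σ(A',A)/↑::A'`. -/
def qual2 (S : AccessSpec) : XQual :=
  S.ann.foldr
    (fun e q => match annStepSigma e with | some s => XQual.or s q | none => q)
    (XQual.path (XPath.axis Axis.self (NodeTest.name S.D.root)))

/-- `A₁^acc := ↑*::*[qual1][1][qual2]`. -/
def A1acc (S : AccessSpec) : XPath :=
  XPath.filter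
    (XPath.pos (XPath.filter (XPath.axis Axis.ancestorOrSelf NodeTest.star) (qual1 S)) 1)
    (qual2 S)

/-- `A₂^acc := ⋀_{ann(A',A) = [Q]} not (↑⁺::A[not Q]/↑::A')`. -/
def A2acc (S : AccessSpec) : XQual :=
  S.ann.foldr
    (fun e q => match e.2.2 with
      | AnnVal.cond qq => XQual.and (XQual.not (XQual.path (XPath.seq
          (XPath.filter (XPath.axis Axis.ancestor (NodeTest.name e.2.1)) (XQual.not qq))
          (XPath.axis Axis.parent (NodeTest.name e.1))))) q
      | _ => q)
    qTrue

/-- The accessibility predicate `A^acc := A₁^acc ∧ A₂^acc`. -/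
def Aacc (S : AccessSpec) : XQual := XQual.and (XQual.path (A1acc S)) (A2acc S)

/-- `A⁺ := ↑⁺::*[A₁^acc]` (the accessible ancestors, nearest first). -/
def Aplus (S : AccessSpec) : XPath :=
  XPath.filter (XPath.axis Axis.ancestor NodeTest.star) (XQual.path (A1acc S))

/-- `A^B := A⁺[1]/ε::B`. -/
def AB (S : AccessSpec) (B : Name) : XPath :=
  XPath.seq (XPath.pos (Aplus S) 1) (XPath.axis Axis.self (NodeTest.name B))
/-! ### Basic position lemmas -/

lemma sub?_append (t : XTree) (p q : Pos) :
    t.sub? (p ++ q) = (t.sub? p).bind (fun s => s.sub? q) := by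
  induction p generalizing t with
  | nil => simp [XTree.sub?]
  | cons i p ih =>
    simp only [List.cons_append, XTree.sub?]
    cases t.children[i]? with
    | none => simp
    | some c => simp [ih]

lemma isNode_of_prefix {t : XTree} {m n : Pos} (h : m <+: n) (hn : t.IsNode n) :
    t.IsNode m := by
  obtain ⟨r, rfl⟩ := h
  unfold XTree.IsNode at *
  rw [sub?_append] at hn
  cases hs : t.sub? m with
  | none => rw [hs] at hn; simp at hn
  | some s => simp

lemma strictAnc_irrefl (n : Pos) : ¬ StrictAnc n n := fun h => h.2 rfl

lemma strictAnc_trans {a b c : Pos} (h1 : StrictAnc a b) (h2 : StrictAnc b c) :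
    StrictAnc a c := by
  refine ⟨h1.1.trans h2.1, ?_⟩
  rintro rfl
  have l1 := h1.1.length_le
  have l2 := h2.1.length_le
  have := h1.1.eq_of_length (le_antisymm l1 l2)
  exact h1.2 this

lemma strictAnc_length {a b : Pos} (h : StrictAnc a b) : a.length < b.length := by
  rcases lt_or_eq_of_le h.1.length_le with h' | h'
  · exact h'
  · exact absurd (h.1.eq_of_length h') h.2

lemma strictAnc_dropLast {y x : Pos} (h : StrictAnc y x) : y <+: x.dropLast := by
  have hlen : y.length ≤ x.length - 1 := by
    have := strictAnc_length h; omega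
  rw [List.dropLast_eq_take]
  exact (List.prefix_take_iff).2 ⟨h.1, hlen⟩

lemma strictAnc_parent {n : Pos} (h : n ≠ []) : StrictAnc (parentPos n) n := by
  refine ⟨List.dropLast_prefix n, ?_⟩
  intro he
  have := congrArg List.length he
  simp only [parentPos, List.length_dropLast] at this
  have : n.length ≠ 0 := by simpa using h
  omega

/-- Characterization of the parent axis over the full document. -/
lemma axisRel_parent_true {x y : Pos} :
    AxisRel (fun _ => True) Axis.parent x y ↔ x ≠ [] ∧ y = parentPos x := by
  constructor
  · rintro ⟨h1, -, h3⟩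
    have hx : x ≠ [] := by
      rintro rfl
      exact absurd (List.prefix_nil.mp h1.1) h1.2
    refine ⟨hx, ?_⟩
    rcases eq_or_ne y (parentPos x) with he | he
    · exact he
    · exfalso
      have hpre : y <+: parentPos x := strictAnc_dropLast h1
      exact h3 (parentPos x) ⟨hpre, he⟩ (strictAnc_parent hx) trivial
  · rintro ⟨hx, rfl⟩
    refine ⟨strictAnc_parent hx, trivial, ?_⟩
    intro z hz1 hz2 _
    have h1 := strictAnc_length hz1
    have h2 := strictAnc_length hz2
    have : (parentPos x).length = x.length - 1 := List.length_dropLast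
    have : x.length ≠ 0 := by simpa using hx
    omega

/-! ### Lexicographic order vs prefixes -/

lemma lex_of_strictAnc {x y : Pos} (h : StrictAnc x y) : posLt x y := by
  obtain ⟨⟨r, rfl⟩, hne⟩ := h
  have hr : r ≠ [] := by rintro rfl; simp at hne
  clear hne
  induction x with
  | nil =>
    cases r with
    | nil => exact absurd rfl hr
    | cons a r => exact List.Lex.nil
  | cons a x ih => exact List.Lex.cons ih

lemma not_lex_of_prefix {x y : Pos} (h : y <+: x) : ¬ posLt x y := by
  induction y generalizing x with
  | nil => intro hl; cases hl
  | cons b y ih =>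
    obtain ⟨r, rfl⟩ := h
    intro hl
    cases hl with
    | cons hl => exact ih ⟨r, rfl⟩ hl
    | rel hr => exact lt_irrefl _ hr
/-! ### typeAt and conformance lemmas -/

lemma typeAt_eq_some_iff {t : XTree} {n : Pos} {A : Name} :
    typeAt t n = some A ↔ ∃ s, t.sub? n = some s ∧ s.lab = Lab.elem A := by
  unfold typeAt
  cases hs : t.sub? n with
  | none => simp
  | some s =>
    cases hl : s.lab with
    | elem a => simp [hl]
    | text c => simp [hl]

lemma isNode_of_typeAt {t : XTree} {n : Pos} {A : Name}
    (h : typeAt t n = some A) : t.IsNode n := by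
  obtain ⟨s, hs, -⟩ := typeAt_eq_some_iff.1 h
  unfold XTree.IsNode
  simp [hs]

/-- Every strict ancestor of a node of a conforming tree is an element node. -/
lemma typeAt_anc_isSome {D : DTD} {t : XTree} (hT : Conforms t D) {m n : Pos}
    (h : StrictAnc m n) (hn : t.IsNode n) : ∃ A, typeAt t m = some A := by
  obtain ⟨r, rfl⟩ := h.1
  have hr : r ≠ [] := by rintro rfl; simp at h; exact h.2 rfl
  have hm : t.IsNode m := isNode_of_prefix ⟨r, rfl⟩ hn
  unfold XTree.IsNode at hm hn
  cases hs : t.sub? m with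
  | none => rw [hs] at hm; simp at hm
  | some s =>
    rcases hT.2.2.1 m s hs with ⟨A, hA, -⟩ | ⟨c, hc⟩
    · exact ⟨A, by rw [typeAt_eq_some_iff]; exact ⟨s, hs, hA⟩⟩
    · exfalso
      have hch : s.children = [] := hT.2.2.2.2 m s c hs hc
      rw [sub?_append, hs] at hn
      cases r with
      | nil => exact hr rfl
      | cons i r' =>
        simp only [Option.bind_some] at hn
        rw [XTree.sub?.eq_def] at hn
        simp [hch] at hn

lemma typeAt_root_iff {D : DTD} {t : XTree} (hT : Conforms t D) {m : Pos}
    (hm : t.IsNode m) : typeAt t m = some D.root ↔ m = [] := by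
  constructor
  · intro h
    obtain ⟨s, hs, hl⟩ := typeAt_eq_some_iff.1 h
    exact hT.2.1 m s hs hl
  · rintro rfl
    rw [typeAt_eq_some_iff]
    exact ⟨t, rfl, hT.1⟩

/-! ### Annotation lookup -/

lemma lookup_eq_some_iff {S : AccessSpec} {A B : Name} {v : AnnVal} :
    S.lookup A B = some v ↔ (A, B, v) ∈ S.ann := by
  unfold AccessSpec.lookup
  constructor
  · intro h
    rcases hf : S.ann.find? fun e => e.1 == A && e.2.1 == B with _ | e
    · rw [hf] at h; simp at h
    · rw [hf] at h
      simp at h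
      have hmem := List.mem_of_find?_eq_some hf
      have hp := List.find?_some hf
      simp only [Bool.and_eq_true, beq_iff_eq] at hp
      have : e = (A, B, v) := by
        obtain ⟨e1, e2, e3⟩ := e
        simp_all
      rw [← this]; exact hmem
  · intro hmem
    rcases hf : S.ann.find? fun e => e.1 == A && e.2.1 == B with _ | e
    · exfalso
      have := List.find?_eq_none.1 hf _ hmem
      simp at this
    · have hmem' := List.mem_of_find?_eq_some hf
      have hp' := List.find?_some hf
      simp only [Bool.and_eq_true, beq_iff_eq] at hp'
      have heq : e = (A, B, v) := by
        have h2 := List.inj_on_of_nodup_map S.ann_nodup hmem' hmem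
          (by obtain ⟨e1, e2, e3⟩ := e; simp_all)
        exact h2
      simp [hf, heq]
/-! ### Semantics of the annotation steps -/

section Sem
variable (T : XTree)

lemma evalQ_annStep (e : Name × Name × AnnVal) (m : Pos) :
    evalQ T (fun _ => True) (annStep e) m ↔
      m ≠ [] ∧ typeAt T m = some e.2.1 ∧ typeAt T (parentPos m) = some e.1 := by
  simp only [annStep, evalQ, evalP, Set.Nonempty, Set.mem_setOf_eq]
  constructor
  · rintro ⟨z, y, ⟨hy1, hy2, hy3⟩, hz1, hz2, hz3⟩
    simp only [AxisRel] at hy2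
    subst hy2
    rw [axisRel_parent_true] at hz2
    obtain ⟨hne, rfl⟩ := hz2
    exact ⟨hne, by simpa [TestOk] using hy3, by simpa [TestOk] using hz3⟩
  · rintro ⟨hne, h1, h2⟩
    refine ⟨parentPos m, m, ⟨isNode_of_typeAt h1, rfl, by simpa [TestOk]⟩,
      isNode_of_typeAt h2, axisRel_parent_true.2 ⟨hne, rfl⟩, by simpa [TestOk]⟩

lemma exists_annStep_iff (S : AccessSpec) (m : Pos) :
    (∃ e ∈ S.ann, evalQ T (fun _ => True) (annStep e) m) ↔ Concerned S T m := by
  constructor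
  · rintro ⟨e, he, h⟩
    rw [evalQ_annStep] at h
    exact ⟨e.2.2, e.1, e.2.1, h.1, h.2.1, h.2.2,
      lookup_eq_some_iff.2 (by simpa using he)⟩
  · rintro ⟨v, A, B, hne, h1, h2, h3⟩
    exact ⟨(A, B, v), lookup_eq_some_iff.1 h3, (evalQ_annStep T _ m).2 ⟨hne, h1, h2⟩⟩

lemma evalQ_cond_step (B A : Name) (q : XQual) (m : Pos) :
    evalQ T (fun _ => True) (XQual.path (XPath.seq
      (XPath.filter (XPath.axis Axis.self (NodeTest.name B)) q)
      (XPath.axis Axis.parent (NodeTest.name A)))) m ↔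
    m ≠ [] ∧ typeAt T m = some B ∧ evalQ T (fun _ => True) q m ∧
      typeAt T (parentPos m) = some A := by
  simp only [evalQ, evalP, Set.Nonempty, Set.mem_setOf_eq]
  constructor
  · rintro ⟨z, y, ⟨⟨hy1, hy2, hy3⟩, hyq⟩, hz1, hz2, hz3⟩
    simp only [AxisRel] at hy2
    subst hy2
    rw [axisRel_parent_true] at hz2
    obtain ⟨hne, rfl⟩ := hz2
    exact ⟨hne, by simpa [TestOk] using hy3, hyq, by simpa [TestOk] using hz3⟩
  · rintro ⟨hne, h1, hq, h2⟩
    refine ⟨parentPos m, m, ⟨⟨isNode_of_typeAt h1, rfl, by simpa [TestOk]⟩, hq⟩,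
      isNode_of_typeAt h2, axisRel_parent_true.2 ⟨hne, rfl⟩, by simpa [TestOk]⟩

end Sem

section Sem2
variable (T : XTree)

lemma exists_annStepSigma_iff (S : AccessSpec) (m : Pos) :
    (∃ e ∈ S.ann, ∃ s, annStepSigma e = some s ∧ evalQ T (fun _ => True) s m) ↔
      ValidAnnAt S T m := by
  constructor
  · rintro ⟨e, he, s, hs, h⟩
    have hcb : ∀ v, e.2.2 = v → S.lookup e.1 e.2.1 = some v := fun v hv =>
      lookup_eq_some_iff.2 (by rw [← hv]; simpa using he)
    unfold annStepSigma at hs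
    rcases hv : e.2.2 with _ | _ | q
    · rw [hv] at hs
      simp only [Option.some_inj] at hs
      subst hs
      rw [evalQ_annStep] at h
      exact Or.inl ⟨e.1, e.2.1, h.1, h.2.1, h.2.2, hcb _ hv⟩
    · rw [hv] at hs; simp at hs
    · rw [hv] at hs
      simp only [Option.some_inj] at hs
      subst hs
      rw [evalQ_cond_step] at h
      exact Or.inr ⟨q, ⟨e.1, e.2.1, h.1, h.2.1, h.2.2.2, hcb _ hv⟩, h.2.2.1⟩
  · rintro (⟨A, B, hne, h1, h2, h3⟩ | ⟨q, ⟨A, B, hne, h1, h2, h3⟩, hq⟩)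
    · exact ⟨(A, B, AnnVal.Y), lookup_eq_some_iff.1 h3, annStep (A, B, AnnVal.Y),
        rfl, (evalQ_annStep T _ m).2 ⟨hne, h1, h2⟩⟩
    · exact ⟨(A, B, AnnVal.cond q), lookup_eq_some_iff.1 h3, _, rfl,
        (evalQ_cond_step T B A q m).2 ⟨hne, h1, hq, h2⟩⟩

lemma evalQ_anc_step (B A : Name) (qq : XQual) (n : Pos) :
    evalQ T (fun _ => True) (XQual.path (XPath.seq
      (XPath.filter (XPath.axis Axis.ancestor (NodeTest.name B)) (XQual.not qq))
      (XPath.axis Axis.parent (NodeTest.name A)))) n ↔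
    ∃ y, y ≠ [] ∧ StrictAnc y n ∧ typeAt T y = some B ∧
      ¬ evalQ T (fun _ => True) qq y ∧ typeAt T (parentPos y) = some A := by
  simp only [evalQ, evalP, Set.Nonempty, Set.mem_setOf_eq]
  constructor
  · rintro ⟨z, y, ⟨⟨hy1, hy2, hy3⟩, hyq⟩, hz1, hz2, hz3⟩
    simp only [AxisRel] at hy2
    rw [axisRel_parent_true] at hz2
    obtain ⟨hne, rfl⟩ := hz2
    exact ⟨y, hne, hy2.1, by simpa [TestOk] using hy3, hyq, by simpa [TestOk] using hz3⟩
  · rintro ⟨y, hne, hanc, h1, hq, h2⟩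
    refine ⟨parentPos y, y, ⟨⟨isNode_of_typeAt h1, ⟨hanc, trivial⟩, by simpa [TestOk]⟩, hq⟩,
      isNode_of_typeAt h2, axisRel_parent_true.2 ⟨hne, rfl⟩, by simpa [TestOk]⟩

/-! ### Fold characterizations of qual1, qual2, A2acc -/

lemma evalQ_foldr_or (acc : Pos → Prop) (l : List (Name × Name × AnnVal))
    (base : XQual) (m : Pos) :
    evalQ T acc (l.foldr (fun e q => XQual.or (annStep e) q) base) m ↔
      evalQ T acc base m ∨ ∃ e ∈ l, evalQ T acc (annStep e) m := by
  induction l with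
  | nil => simp
  | cons e l ih =>
    simp only [List.foldr_cons, evalQ, ih, List.mem_cons]
    constructor
    · rintro (h | h | ⟨e', he', h⟩)
      · exact Or.inr ⟨e, Or.inl rfl, h⟩
      · exact Or.inl h
      · exact Or.inr ⟨e', Or.inr he', h⟩
    · rintro (h | ⟨e', (rfl | he'), h⟩)
      · exact Or.inr (Or.inl h)
      · exact Or.inl h
      · exact Or.inr (Or.inr ⟨e', he', h⟩)

lemma evalQ_foldr_sigma (acc : Pos → Prop) (l : List (Name × Name × AnnVal))
    (base : XQual) (m : Pos) :
    evalQ T acc (l.foldr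
      (fun e q => match annStepSigma e with | some s => XQual.or s q | none => q)
      base) m ↔
      evalQ T acc base m ∨
        ∃ e ∈ l, ∃ s, annStepSigma e = some s ∧ evalQ T acc s m := by
  induction l with
  | nil => simp
  | cons e l ih =>
    simp only [List.foldr_cons, List.mem_cons]
    rcases hs : annStepSigma e with _ | s
    · rw [ih]
      constructor
      · rintro (h | ⟨e', he', hss⟩)
        · exact Or.inl h
        · exact Or.inr ⟨e', Or.inr he', hss⟩
      · rintro (h | ⟨e', (rfl | he'), s', hs', h⟩)
        · exact Or.inl h
        · rw [hs] at hs'; simp at hs'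
        · exact Or.inr ⟨e', he', s', hs', h⟩
    · simp only [evalQ, ih]
      constructor
      · rintro (h | h | ⟨e', he', hss⟩)
        · exact Or.inr ⟨e, Or.inl rfl, s, hs, h⟩
        · exact Or.inl h
        · exact Or.inr ⟨e', Or.inr he', hss⟩
      · rintro (h | ⟨e', (rfl | he'), s', hs', h⟩)
        · exact Or.inr (Or.inl h)
        · rw [hs] at hs'
          simp only [Option.some_inj] at hs'
          subst hs'
          exact Or.inl h
        · exact Or.inr (Or.inr ⟨e', he', s', hs', h⟩)

def badPath (e : Name × Name × AnnVal) (qq : XQual) : XQual :=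
  XQual.not (XQual.path (XPath.seq
    (XPath.filter (XPath.axis Axis.ancestor (NodeTest.name e.2.1)) (XQual.not qq))
    (XPath.axis Axis.parent (NodeTest.name e.1))))

lemma evalQ_foldr_and (acc : Pos → Prop) (l : List (Name × Name × AnnVal)) (m : Pos) :
    evalQ T acc (l.foldr
      (fun e q => match e.2.2 with
        | AnnVal.cond qq => XQual.and (badPath e qq) q
        | _ => q) qTrue) m ↔
      evalQ T acc qTrue m ∧
        ∀ e ∈ l, ∀ qq, e.2.2 = AnnVal.cond qq → evalQ T acc (badPath e qq) m := by
  induction l with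
  | nil => simp
  | cons e l ih =>
    simp only [List.foldr_cons, List.mem_cons]
    rcases hv : e.2.2 with _ | _ | q
    · rw [ih]
      constructor
      · rintro ⟨h, hall⟩
        refine ⟨h, ?_⟩
        rintro e' (rfl | he') qq hqq
        · rw [hv] at hqq; cases hqq
        · exact hall e' he' qq hqq
      · rintro ⟨h, hall⟩
        exact ⟨h, fun e' he' qq hqq => hall e' (Or.inr he') qq hqq⟩
    · rw [ih]
      constructor
      · rintro ⟨h, hall⟩
        refine ⟨h, ?_⟩
        rintro e' (rfl | he') qq hqq
        · rw [hv] at hqq; cases hqq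
        · exact hall e' he' qq hqq
      · rintro ⟨h, hall⟩
        exact ⟨h, fun e' he' qq hqq => hall e' (Or.inr he') qq hqq⟩
    · show evalQ T acc (XQual.and (badPath e q) _) m ↔ _
      simp only [evalQ, ih]
      constructor
      · rintro ⟨hb, h, hall⟩
        refine ⟨h, ?_⟩
        rintro e' (rfl | he') qq hqq
        · rw [hv] at hqq
          cases hqq
          exact hb
        · exact hall e' he' qq hqq
      · rintro ⟨h, hall⟩
        exact ⟨hall e (Or.inl rfl) q hv, h,
          fun e' he' qq hqq => hall e' (Or.inr he') qq hqq⟩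

end Sem2
section Char
variable {S : AccessSpec} {T : XTree} (hT : Conforms T S.D)
include hT

lemma evalQ_self_root {m : Pos} (hm : T.IsNode m) :
    evalQ T (fun _ => True) (XQual.path (XPath.axis Axis.self (NodeTest.name S.D.root))) m
      ↔ m = [] := by
  simp only [evalQ, evalP, Set.Nonempty, Set.mem_setOf_eq]
  constructor
  · rintro ⟨y, hy1, hy2, hy3⟩
    simp only [AxisRel] at hy2
    subst hy2
    exact (typeAt_root_iff hT hm).1 (by simpa [TestOk] using hy3)
  · rintro rfl
    exact ⟨[], hm, rfl, by simpa [TestOk] using (typeAt_root_iff hT hm).2 rfl⟩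

lemma evalQ_qual1 {m : Pos} (hm : T.IsNode m) :
    evalQ T (fun _ => True) (qual1 S) m ↔ ConcernedR S T m := by
  unfold qual1
  rw [evalQ_foldr_or, evalQ_self_root hT hm, exists_annStep_iff]
  rfl

lemma evalQ_qual2 {m : Pos} (hm : T.IsNode m) :
    evalQ T (fun _ => True) (qual2 S) m ↔ ValidR S T m := by
  unfold qual2
  rw [evalQ_foldr_sigma, evalQ_self_root hT hm, exists_annStepSigma_iff]
  rfl

omit hT in
lemma evalQ_qTrue {m : Pos} :
    evalQ T (fun _ => True) qTrue m ↔ T.IsNode m ∧ (typeAt T m).isSome = true := by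
  simp only [qTrue, evalQ, evalP, Set.Nonempty, Set.mem_setOf_eq]
  constructor
  · rintro ⟨y, hy1, hy2, hy3⟩
    simp only [AxisRel] at hy2
    subst hy2
    exact ⟨hy1, hy3⟩
  · rintro ⟨h1, h2⟩
    exact ⟨m, h1, rfl, h2⟩

end Char
section Unfold
variable (T : XTree) (acc : Pos → Prop)

lemma evalQ_path (p : XPath) (x : Pos) :
    evalQ T acc (XQual.path p) x ↔ (evalP T acc p x).Nonempty := by simp [evalQ]

lemma evalQ_and' (q₁ q₂ : XQual) (x : Pos) :
    evalQ T acc (XQual.and q₁ q₂) x ↔ evalQ T acc q₁ x ∧ evalQ T acc q₂ x := by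
  simp [evalQ]

lemma evalQ_not' (q : XQual) (x : Pos) :
    evalQ T acc (XQual.not q) x ↔ ¬ evalQ T acc q x := by simp [evalQ]

lemma evalP_filter (p : XPath) (q : XQual) (x : Pos) :
    evalP T acc (XPath.filter p q) x = {y | y ∈ evalP T acc p x ∧ evalQ T acc q y} := by
  simp [evalP]

lemma evalP_pos (p : XPath) (k : ℕ) (x : Pos) :
    evalP T acc (XPath.pos p k) x = nthRev (evalP T acc p x) k := by simp [evalP]

lemma evalP_axis (ax : Axis) (nt : NodeTest) (x : Pos) :
    evalP T acc (XPath.axis ax nt) x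
      = {y | T.IsNode y ∧ AxisRel acc ax x y ∧ TestOk T nt y} := by simp [evalP]

end Unfold
/-- For any security view `V = (D_v, ann)` and any instance `T`
conforming to the original DTD `D`, an (element) node `n` of `T` is accessible
w.r.t. the access specification iff `n ⊨ A^acc`, where `A^acc := A₁^acc ∧ A₂^acc`
is a qualifier of the fragment `X↑[n]`. In particular, `n ⊨ A₁^acc` iff condition
(i) of the accessibility definition holds at `n`, and `n ⊨ A₂^acc` iff condition
(ii) holds at `n`. -/
theorem Aacc_characterizes_accessibility (S : AccessSpec) (T : XTree)
    (hT : Conforms T S.D) (n : Pos) (hn : T.IsNode n)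
    (helem : (typeAt T n).isSome = true) :
    (evalQ T (fun _ => True) (XQual.path (A1acc S)) n ↔ CondI S T n) ∧
    (evalQ T (fun _ => True) (A2acc S) n ↔ CondII S T n) ∧
    (evalQ T (fun _ => True) (Aacc S) n ↔ Accessible S T n) := by
  -- the set of concerned ancestors-or-self of `n`
  set A : Set Pos := {y | (y = n ∨ StrictAnc y n) ∧ ConcernedR S T y} with hA
  have hAnode : ∀ y ∈ A, T.IsNode y := by
    rintro y ⟨(rfl | h), -⟩
    · exact hn
    · exact isNode_of_prefix h.1 hn
  have hApre : ∀ y ∈ A, y <+: n := by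
    rintro y ⟨(rfl | h), -⟩
    · exact List.prefix_refl _
    · exact h.1
  have hSpEq : evalP T (fun _ => True)
      (XPath.filter (XPath.axis Axis.ancestorOrSelf NodeTest.star) (qual1 S)) n = A := by
    rw [evalP_filter, evalP_axis]
    ext y
    simp only [Set.mem_setOf_eq, AxisRel, and_true, hA]
    constructor
    · rintro ⟨⟨hy1, hy2, -⟩, hq⟩
      exact ⟨hy2, (evalQ_qual1 hT hy1).1 hq⟩
    · rintro ⟨hy2, hc⟩
      have hy1 : T.IsNode y := hAnode y ⟨hy2, hc⟩
      have hts : TestOk T NodeTest.star y := by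
        rcases hy2 with rfl | h
        · exact helem
        · obtain ⟨B, hB⟩ := typeAt_anc_isSome hT h hn
          show (typeAt T y).isSome = true
          simp [hB]
      exact ⟨⟨hy1, hy2, hts⟩, (evalQ_qual1 hT hy1).2 hc⟩
  have hAFin : A.Finite := by
    apply Set.Finite.subset (List.finite_toSet n.inits)
    intro y hy
    simpa [List.mem_inits] using hApre y hy
  have hfirst : ∀ x, x ∈ nthRev A 1 ↔ x ∈ A ∧ ∀ y ∈ A, ¬ StrictAnc x y := by
    intro x
    unfold nthRev
    simp only [Set.mem_setOf_eq]
    have hsub : {y | y ∈ A ∧ posLt x y}.Finite := hAFin.subset fun z hz => hz.1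
    constructor
    · rintro ⟨hx, hcard⟩
      refine ⟨hx, ?_⟩
      intro y hy hxy
      have hemp : {y | y ∈ A ∧ posLt x y} = ∅ :=
        (Set.ncard_eq_zero hsub).1 (by simpa using hcard)
      have hmem : y ∈ ({y | y ∈ A ∧ posLt x y} : Set Pos) := ⟨hy, lex_of_strictAnc hxy⟩
      rw [hemp] at hmem
      exact hmem
    · rintro ⟨hx, hmax⟩
      refine ⟨hx, ?_⟩
      have hemp : {y | y ∈ A ∧ posLt x y} = ∅ := by
        ext y
        simp only [Set.mem_setOf_eq, Set.mem_empty_iff_false, iff_false, not_and]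
        intro hy hlt
        rcases List.prefix_or_prefix_of_prefix (hApre x hx) (hApre y hy) with h | h
        · have hne : x ≠ y := by
            rintro rfl
            exact not_lex_of_prefix (List.prefix_refl x) hlt
          exact hmax y hy ⟨h, hne⟩
        · exact not_lex_of_prefix h hlt
      rw [hemp]
      simp
  -- characterization of A1acc
  have hA1 : evalQ T (fun _ => True) (XQual.path (A1acc S)) n ↔
      ∃ x ∈ A, (∀ y ∈ A, ¬ StrictAnc x y) ∧ ValidR S T x := by
    rw [evalQ_path]
    unfold A1acc
    rw [evalP_filter, evalP_pos, hSpEq]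
    constructor
    · rintro ⟨x, hx1, hx2⟩
      obtain ⟨hxA, hxmax⟩ := (hfirst x).1 hx1
      exact ⟨x, hxA, hxmax, (evalQ_qual2 hT (hAnode x hxA)).1 hx2⟩
    · rintro ⟨x, hxA, hxmax, hv⟩
      exact ⟨x, (hfirst x).2 ⟨hxA, hxmax⟩, (evalQ_qual2 hT (hAnode x hxA)).2 hv⟩
  have part1 : evalQ T (fun _ => True) (XQual.path (A1acc S)) n ↔ CondI S T n := by
    rw [hA1]
    constructor
    · rintro ⟨x, ⟨hxn, hxc⟩, hxmax, hxv⟩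
      rcases hxn with rfl | hanc
      · exact Or.inl ⟨hxc, hxv⟩
      · have hnc : ¬ ConcernedR S T n := by
          intro hc
          exact hxmax n ⟨Or.inl rfl, hc⟩ hanc
        refine Or.inr ⟨hnc, x, hanc, hxc, hxv, ?_⟩
        intro m' h1 h2 hcm'
        exact hxmax m' ⟨Or.inr h2, Or.inr hcm'⟩ h1
    · rintro (⟨hc, hv⟩ | ⟨hnc, m, hanc, hc, hv, hbet⟩)
      · refine ⟨n, ⟨Or.inl rfl, hc⟩, ?_, hv⟩
        intro y hy hny
        rcases hApre y hy with h
        have := strictAnc_length hny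
        have := h.length_le
        omega
      · refine ⟨m, ⟨Or.inr hanc, hc⟩, ?_, hv⟩
        rintro y ⟨hyn, hyc⟩ hmy
        rcases hyn with rfl | hyn
        · exact hnc hyc
        · have hyne : y ≠ [] := by
            intro h
            subst h
            have := strictAnc_length hmy
            simp at this
          rcases hyc with h | h
          · exact hyne h
          · exact hbet y hmy hyn h
  -- characterization of A2acc
  have hA2fold : evalQ T (fun _ => True) (A2acc S) n ↔
      evalQ T (fun _ => True) qTrue n ∧
        ∀ e ∈ S.ann, ∀ qq, e.2.2 = AnnVal.cond qq →
          evalQ T (fun _ => True) (badPath e qq) n := by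
    unfold A2acc
    exact evalQ_foldr_and T (fun _ => True) S.ann n
  have part2 : evalQ T (fun _ => True) (A2acc S) n ↔ CondII S T n := by
    rw [hA2fold]
    constructor
    · rintro ⟨-, hall⟩
      intro m q hanc hcb
      obtain ⟨A', B', hne, h1, h2, h3⟩ := hcb
      have hmem : (A', B', AnnVal.cond q) ∈ S.ann := lookup_eq_some_iff.1 h3
      have hb := hall (A', B', AnnVal.cond q) hmem q rfl
      rw [badPath, evalQ_not', evalQ_anc_step] at hb
      by_contra hq
      exact hb ⟨m, hne, hanc, h1, hq, h2⟩
    · intro hII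
      refine ⟨evalQ_qTrue.2 ⟨hn, helem⟩, ?_⟩
      intro e he qq hqq
      rw [badPath, evalQ_not', evalQ_anc_step]
      rintro ⟨y, hyne, hanc, h1, hq, h2⟩
      refine hq (hII y qq hanc ⟨e.1, e.2.1, hyne, h1, h2, ?_⟩)
      apply lookup_eq_some_iff.2
      rw [← hqq]
      simpa using he
  refine ⟨part1, part2, ?_⟩
  rw [Aacc, evalQ_and', part1, part2]
  constructor
  · rintro ⟨h1, h2⟩
    exact ⟨hn, h1, h2⟩
  · rintro ⟨-, h1, h2⟩
    exact ⟨h1, h2⟩
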